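/- Let m ≥ 2, n ≥ 3, and let f be a maximal IC-coloring of K_{1(n),m} with vertices listed as u_1, …, u_{m+n} so that f(u_i) < f(u_{i+1}) for all i; set f_0 = 0, f_i = f(u_1) + ⋯ + f(u_i), s_0 = 0, s_i = f(u_i), r_i = s_i − ∑_{j=0}^{i−1} s_j, and k_0 = max{ j : u_j ∈ V_0 }. Suppose S_1 = { i < k_0 : r_i = 1 and u_i ∈ V_0 } is nonempty; let i_1 = min S_1 and S_2 = { i ≥ i_1 + 1 : u_i ∈ V_0 and f(u_i) > f_{i−1} − f(u_{i_1}) }. If S_2 is nonempty, then f(K_{1(n),m}) ≤ 2^{m+n} − 2^m + 1. -/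

import Mathlib

/-- The join `H₀ ∨ H₁` of two graphs: all edges of `H₀`, all edges of `H₁`, and all
pairs with one endpoint in each. -/
def graphJoin {α β : Type*} (G : SimpleGraph α) (H : SimpleGraph β) :
    SimpleGraph (α ⊕ β) where
  Adj x y :=
    match x, y with
    | Sum.inl a, Sum.inl b => G.Adj a b
    | Sum.inr a, Sum.inr b => H.Adj a b
    | Sum.inl _, Sum.inr _ => True
    | Sum.inr _, Sum.inl _ => True
  symm := by
    refine ⟨?_⟩
    rintro (a | a) (b | b) h
    · exact G.adj_symm h
    · trivial
    · trivial
    · exact H.adj_symm h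
  loopless := by
    refine ⟨?_⟩
    rintro (a | a) h
    · exact G.irrefl h
    · exact H.irrefl h

/-- A coloring `f : V(G) → ℕ` (positive-valued) is an IC-coloring if every integer
`k` with `1 ≤ k ≤ f(G)` is the `f`-sum of some nonempty vertex subset inducing a
connected subgraph. -/
def IsICColoring {α : Type*} [Fintype α] (G : SimpleGraph α) (f : α → ℕ) : Prop :=
  (∀ v, 0 < f v) ∧
    ∀ k : ℕ, 1 ≤ k → k ≤ ∑ v, f v →
      ∃ S : Finset α, S.Nonempty ∧ (G.induce (S : Set α)).Connected ∧
        ∑ v ∈ S, f v = k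

/-- The IC-index `M(G)`: the maximum of `f(G)` over all IC-colorings `f` of `G`. -/
noncomputable def ICIndex {α : Type*} [Fintype α] (G : SimpleGraph α) : ℕ :=
  sSup {t | ∃ f : α → ℕ, IsICColoring G f ∧ ∑ v, f v = t}

/-- `K_{1(n),m} = O_m ∨ K_n`: the complete `(n+1)`-partite graph with `n` parts of
size one and one part (`V₀ = Fin m`, the left summand) of size `m`. -/
def K1nm (m n : ℕ) : SimpleGraph (Fin m ⊕ Fin n) :=
  graphJoin (⊥ : SimpleGraph (Fin m)) (⊤ : SimpleGraph (Fin n))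


lemma pow_sum_lower (A : Finset ℕ) (E : ℕ) (hA : ∀ e ∈ A, E ≤ e) :
    (2:ℤ)^E * (2^A.card - 1) ≤ ∑ e ∈ A, (2:ℤ)^e := by
  induction A using Finset.strongInduction with
  | _ A ih =>
    rcases A.eq_empty_or_nonempty with rfl | hne
    · simp
    · have hMA : A.max' hne ∈ A := A.max'_mem hne
      set M := A.max' hne with hM
      have hsub : A.erase M ⊂ A := Finset.erase_ssubset hMA
      have hcard : (A.erase M).card = A.card - 1 := Finset.card_erase_of_mem hMA
      have hc1 : 1 ≤ A.card := Finset.card_pos.mpr hne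
      obtain ⟨a, ha⟩ : ∃ a, A.card = a + 1 := ⟨A.card - 1, by omega⟩
      have hME : E + a ≤ M := by
        have hsub2 : A ⊆ Finset.Icc E M :=
          fun x hx => Finset.mem_Icc.mpr ⟨hA x hx, A.le_max' x hx⟩
        have := Finset.card_le_card hsub2
        rw [Nat.card_Icc] at this
        omega
      have IH := ih (A.erase M) hsub (fun e he => hA e (Finset.mem_of_mem_erase he))
      rw [hcard, ha] at IH
      simp only [Nat.add_sub_cancel] at IH
      have hsum : ∑ e ∈ A, (2:ℤ)^e = 2^M + ∑ e ∈ A.erase M, (2:ℤ)^e :=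
        (Finset.add_sum_erase _ _ hMA).symm
      have hpow : (2:ℤ)^(E + a) ≤ 2^M := pow_le_pow_right₀ (by norm_num) hME
      rw [hsum, ha]
      have h1 : (2:ℤ)^(E + a) = 2^E * 2^a := pow_add 2 _ _
      have h2 : (2:ℤ)^(a+1) = 2^a * 2 := pow_succ 2 a
      rw [h2]
      have h3 : (2:ℤ) ^ E * (2 ^ a * 2 - 1) = 2^E * 2^a + 2^E*(2^a - 1) := by ring
      rw [h3]
      exact add_le_add (h1 ▸ hpow) IH

lemma mul_pow_helper (lam A : ℤ) (ρ e T' : ℕ) (hA : A ≤ lam) (hA0 : 0 ≤ A) (he : e ≤ ρ) :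
    A * 2^e * 2^T' ≤ lam * 2^(T' + ρ) := by
  rw [pow_add]
  have h2 : (2:ℤ)^e ≤ 2^ρ := pow_le_pow_right₀ (by norm_num) he
  have h3 : (0:ℤ) < 2^T' := by positivity
  have h4 : (0:ℤ) < 2^e := by positivity
  have h5 : A * 2^e ≤ lam * 2^ρ := by nlinarith
  nlinarith


set_option maxHeartbeats 2000000 in
lemma arith_bound (p m i₁ : ℕ) (L : Finset ℕ) (g F : ℕ → ℕ)
    (hL : L ⊆ Finset.Icc 1 p)
    (hm : L.card = m)
    (hp3 : m + 3 ≤ p)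
    (hF0 : F 0 = 0)
    (hFs : ∀ j, F (j+1) = F j + g (j+1))
    (hg1 : ∀ j, 1 ≤ j → j ≤ p → 1 ≤ g j)
    (hgmono : ∀ j, 1 ≤ j → j + 1 ≤ p → g j < g (j+1))
    (hiL : i₁ ∈ L)
    (hc : g i₁ = F (i₁-1) + 1)
    (hlam : ∀ j, 1 ≤ j → j ≤ p → g j ≤ F (j-1) + 1)
    (hlt : ∀ ℓ, ℓ ∈ L → ℓ < i₁ → g ℓ ≤ F (ℓ-1))
    (hdich : ∀ ℓ, ℓ ∈ L → i₁ < ℓ → F (ℓ-1) < g ℓ + g i₁ →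
      ℓ < p ∧ g (ℓ+1) ≤ g ℓ + g i₁) :
    (F p : ℤ) ≤ 2^p - 2^m + 1 := by
  obtain ⟨hi1, hip⟩ : 1 ≤ i₁ ∧ i₁ ≤ p := Finset.mem_Icc.mp (hL hiL)
  obtain ⟨i₀, rfl⟩ : ∃ i₀, i₁ = i₀ + 1 := ⟨i₁ - 1, by omega⟩
  set i₁ := i₀ + 1 with hi₁def
  set c := g i₁ with hcdef
  set c₀ := F i₀ with hc0def
  have hcc : c = c₀ + 1 := by
    have h := hc
    simp only [hi₁def, Nat.add_sub_cancel] at h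
    exact h
  -- F is monotone
  have Fmono : ∀ a b : ℕ, a ≤ b → F a ≤ F b := by
    intro a b hab
    induction b with
    | zero => have : a = 0 := by omega
              simp [this]
    | succ b ihb =>
      rcases Nat.lt_or_ge a (b+1) with h | h
      · have h1 := ihb (by omega)
        have h2 := hFs b
        omega
      · have : a = b + 1 := by omega
        simp [this]
  -- F i₁
  have hFi₁ : F i₁ = 2 * c₀ + 1 := by
    rw [hi₁def, hFs i₀, ← hc0def, ← hcdef, hcc]; ring
  -- g values lower bounds
  have gg : ∀ d, i₁ + d ≤ p → c + d ≤ g (i₁ + d) := by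
    intro d
    induction d with
    | zero => simp [hcdef]
    | succ d ihd =>
      intro hdp
      have h1 := ihd (by omega)
      have h2 := hgmono (i₁ + d) (by omega) (by omega)
      have h3 : i₁ + (d + 1) = (i₁ + d) + 1 := by omega
      rw [h3]
      omega
  have gj : ∀ j, 1 ≤ j → j ≤ p → j ≤ g j := by
    intro j hj hjp
    induction j with
    | zero => omega
    | succ j ihj =>
      rcases Nat.eq_zero_or_pos j with h | h
      · subst h
        exact hg1 1 le_rfl (by omega)
      · have h1 := ihj (by omega) (by omega)
        have h2 := hgmono j (by omega) (by omega)
        omega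
  -- F j lower bounds beyond i₁
  have FB1 : ∀ j, i₁ ≤ j → 2 * c₀ + 1 ≤ F j := by
    intro j hj; rw [← hFi₁]; exact Fmono _ _ hj
  have FB2 : ∀ j, i₁ + 1 ≤ j → i₁ + 1 ≤ p → 3 * c₀ + 3 ≤ F j := by
    intro j hj hp
    have h1 : F (i₁ + 1) = F i₁ + g (i₁ + 1) := hFs i₁
    have h2 := gg 1 (by omega)
    have := Fmono (i₁ + 1) j hj
    omega
  have FB3 : ∀ j, i₁ + 2 ≤ j → i₁ + 2 ≤ p → 4 * c₀ + 6 ≤ F j := by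
    intro j hj hp
    have h1 : F (i₁ + 2) = F (i₁ + 1) + g (i₁ + 2) := hFs (i₁ + 1)
    have h2 := gg 2 (by omega)
    have h3 := FB2 (i₁ + 1) le_rfl (by omega)
    have := Fmono (i₁ + 2) j hj
    omega
  -- size of c vs i₁
  have F123 : ∀ j, j ≤ p → j * (j+1) ≤ 2 * F j := by
    intro j hjp
    induction j with
    | zero => simp
    | succ j ihj =>
      have h1 := ihj (by omega)
      have h2 := gj (j+1) (by omega) hjp
      have h3 : F (j+1) = F j + g (j+1) := hFs j
      have e1 : (j+1)*(j+1+1) = j*(j+1) + 2*(j+1) := by ring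
      omega
  have cbig : ∀ k, k ≤ i₀ → k * (k+1) ≤ 2 * c₀ := by
    intro k hk
    have h1 := F123 k (by omega)
    have h2 := Fmono k i₀ hk
    omega
  -- c₀ = 0 implies i₀ = 0
  have hc00 : c₀ = 0 → i₀ = 0 := by
    intro h0
    by_contra hne
    have h1 : 1 ≤ i₀ := by omega
    have h2 : F 1 = F 0 + g 1 := hFs 0
    have h3 := hg1 1 le_rfl (by omega)
    have h4 := Fmono 1 i₀ h1
    omega
  have hF2 : 3 ≤ F 2 := by
    have h1 : F 2 = F 1 + g 2 := hFs 1
    have h2 : F 1 = F 0 + g 1 := hFs 0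
    have h3 := hg1 1 le_rfl (by omega)
    have h4 := gj 2 (by omega) (by omega)
    omega
  -- the deficiency function
  set lamz : ℕ → ℤ := fun j => (F (j-1) : ℤ) + 1 - (g j : ℤ) with hlamz
  have hlam0 : ∀ j, 1 ≤ j → j ≤ p → 0 ≤ lamz j := by
    intro j h1 h2
    have := hlam j h1 h2
    simp only [hlamz]
    push_cast
    omega
  -- the B-type predicate
  set Bp : ℕ → Prop := fun ℓ => ℓ ∈ L ∧ i₁ < ℓ ∧ F (ℓ-1) < g ℓ + c with hBpdef
  have BpP : ∀ ℓ, Bp ℓ → ℓ < p ∧ g (ℓ+1) ≤ g ℓ + c :=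
    fun ℓ h => hdich ℓ h.1 h.2.1 h.2.2
  have lamB : ∀ ℓ, Bp ℓ → (F (ℓ-1) : ℤ) + 1 - c ≤ lamz (ℓ+1) := by
    intro ℓ hB
    have h1 := (BpP ℓ hB).2
    have h2 : 1 ≤ ℓ := by omega
    have h3 : F ℓ = F (ℓ-1) + g ℓ := by
      obtain ⟨ℓ', rfl⟩ : ∃ ℓ', ℓ = ℓ' + 1 := ⟨ℓ - 1, by omega⟩
      simpa using hFs ℓ'
    simp only [hlamz, Nat.add_sub_cancel]
    push_cast
    omega
  have lamA : ∀ ℓ, ℓ ∈ L → i₁ < ℓ → ℓ ≤ p → ¬ Bp ℓ → (c:ℤ) + 1 ≤ lamz ℓ := by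
    intro ℓ h1 h2 h3 h4
    have h5 : g ℓ + c ≤ F (ℓ-1) := by
      by_contra hcon
      exact h4 ⟨h1, h2, by omega⟩
    simp only [hlamz]
    push_cast
    omega
  have lam_lt : ∀ ℓ, ℓ ∈ L → ℓ < i₁ → 1 ≤ lamz ℓ := by
    intro ℓ h1 h2
    have := hlt ℓ h1 h2
    simp only [hlamz]
    push_cast
    omega
  -- R and t
  set R : ℕ → ℤ := fun x => ∑ j ∈ Finset.Icc x p, lamz j * 2^(p-j) with hRdef
  set t : ℕ → ℕ := fun x => (L.filter (fun ℓ => x ≤ ℓ)).card with htdef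
  have Rsplit : ∀ x, x ≤ p → R x = lamz x * 2^(p-x) + R (x+1) := by
    intro x hxp
    have : Finset.Icc x p = insert x (Finset.Icc (x+1) p) := by
      ext a
      simp only [Finset.mem_Icc, Finset.mem_insert]
      omega
    simp only [hRdef]
    rw [this, Finset.sum_insert (by simp)]
  have Rend : R (p+1) = 0 := by
    simp only [hRdef]
    rw [Finset.Icc_eq_empty (by omega)]
    simp
  have tsplit : ∀ x, t x = (if x ∈ L then 1 else 0) + t (x+1) := by
    intro x
    simp only [htdef]
    rw [Finset.card_filter, Finset.card_filter]
    have hsum : ∀ ℓ ∈ L, (if x ≤ ℓ then (1:ℕ) else 0)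
        = (if x = ℓ then 1 else 0) + (if x+1 ≤ ℓ then 1 else 0) := by
      intro ℓ _
      by_cases h1 : x ≤ ℓ <;> by_cases h2 : x = ℓ <;> by_cases h3 : x+1 ≤ ℓ <;>
        simp [h1, h2, h3] <;> omega
    rw [Finset.sum_congr rfl hsum, Finset.sum_add_distrib, Finset.sum_ite_eq L x (fun _ => 1)]
  have t_in : ∀ x, x ∈ L → t x = t (x+1) + 1 := by
    intro x hx; rw [tsplit x]; simp [hx]; omega
  have t_notin : ∀ x, x ∉ L → t x = t (x+1) := by
    intro x hx; rw [tsplit x]; simp [hx]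
  have tbound : ∀ x, t (x+1) + x ≤ p ∨ t (x+1) = 0 := by
    intro x
    rcases le_or_gt x p with h | h
    · left
      have hs : L.filter (fun ℓ => x+1 ≤ ℓ) ⊆ Finset.Icc (x+1) p := by
        intro a ha
        simp only [Finset.mem_filter] at ha
        have := Finset.mem_Icc.mp (hL ha.1)
        exact Finset.mem_Icc.mpr (by omega)
      have := Finset.card_le_card hs
      rw [Nat.card_Icc] at this
      simp only [htdef]
      omega
    · right
      simp only [htdef]
      rw [Finset.card_eq_zero, Finset.filter_eq_empty_iff]
      intro a ha
      have := Finset.mem_Icc.mp (hL ha)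
      omega
  have CNT : ∀ (x : ℕ) (W : Finset ℕ), W ⊆ L → (∀ w ∈ W, w ≤ x) → W.card + t (x+1) ≤ m := by
    intro x W hWL hWx
    have h1 : W ⊆ L.filter (fun ℓ => ℓ ≤ x) := by
      intro w hw
      exact Finset.mem_filter.mpr ⟨hWL hw, hWx w hw⟩
    have h2 := Finset.card_le_card h1
    have h3 : (L.filter (fun ℓ => ℓ ≤ x)).card + (L.filter (fun ℓ => ¬ ℓ ≤ x)).card = L.card :=
      Finset.card_filter_add_card_filter_not _
    have h4 : L.filter (fun ℓ => ¬ ℓ ≤ x) = L.filter (fun ℓ => x+1 ≤ ℓ) := by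
      apply Finset.filter_congr
      intro a _
      constructor
      · intro h; omega
      · intro h; omega
    rw [h4] at h3
    simp only [htdef]
    omega
  -- helper: counting contradictions
  have hW3 : ∀ y, i₁ ≤ y → (y+1) ∈ L → (y+2) ∈ L → 3 + t (y+2+1) ≤ m := by
    intro y hy h1 h2
    have hcard : ({i₁, y+1, y+2} : Finset ℕ).card = 3 := by
      rw [Finset.card_insert_of_notMem (by
          simp only [Finset.mem_insert, Finset.mem_singleton, not_or]; omega),
        Finset.card_insert_of_notMem (by
          simp only [Finset.mem_singleton]; omega), Finset.card_singleton]
    have hsub : ({i₁, y+1, y+2} : Finset ℕ) ⊆ L := by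
      intro w hw
      simp only [Finset.mem_insert, Finset.mem_singleton] at hw
      rcases hw with rfl | rfl | rfl
      · exact hiL
      · exact h1
      · exact h2
    have := CNT (y+2) {i₁, y+1, y+2} hsub (by
      intro w hw
      simp only [Finset.mem_insert, Finset.mem_singleton] at hw
      rcases hw with rfl | rfl | rfl <;> omega)
    omega
  have hW2 : ∀ y, i₁ ≤ y → (y+1) ∈ L → 2 + t (y+2+1) ≤ m := by
    intro y hy h1
    have hcard : ({i₁, y+1} : Finset ℕ).card = 2 := by
      rw [Finset.card_insert_of_notMem (by
          simp only [Finset.mem_singleton]; omega), Finset.card_singleton]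
    have hsub : ({i₁, y+1} : Finset ℕ) ⊆ L := by
      intro w hw
      simp only [Finset.mem_insert, Finset.mem_singleton] at hw
      rcases hw with rfl | rfl
      · exact hiL
      · exact h1
    have := CNT (y+2) {i₁, y+1} hsub (by
      intro w hw
      simp only [Finset.mem_insert, Finset.mem_singleton] at hw
      rcases hw with rfl | rfl <;> omega)
    omega
  -- the main downward induction
  have key : ∀ d x, i₁ + 1 ≤ x → x + d = p + 1 →
      (¬ Bp (x-1) → (2:ℤ)^(t x + 1) - 2 ≤ R x) ∧
      (Bp (x-1) → (2:ℤ)^(t x + 2) - 2 ≤ R x) := by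
    intro d
    induction d with
    | zero =>
      intro x hx hxp
      have hxe : x = p + 1 := by omega
      subst hxe
      have ht0 : t (p+1) = 0 := by
        rcases tbound p with h | h
        · omega
        · exact h
      constructor
      · intro _
        rw [Rend, ht0]
        norm_num
      · intro hB
        have := (BpP _ hB).1
        simp only [Nat.add_sub_cancel] at this
        omega
    | succ d ih =>
      intro x hx hxp
      have hxp' : x ≤ p := by omega
      have IH := ih (x+1) (by omega) (by omega)
      simp only [Nat.add_sub_cancel] at IH
      have hRs := Rsplit x hxp'
      have hlamx0 : 0 ≤ lamz x := hlam0 x (by omega) hxp'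
      have hTb : t (x+1) + x ≤ p := by
        rcases tbound x with h | h
        · exact h
        · omega
      obtain ⟨ρ, hρ⟩ : ∃ ρ, p - x = t (x+1) + ρ := ⟨p - x - t (x+1), by omega⟩
      set T' := t (x+1) with hT'def
      have hTpos : (0:ℤ) < 2^T' := by positivity
      have e1 : (2:ℤ)^(T'+1) = 2*2^T' := by rw [pow_succ]; ring
      have e2 : (2:ℤ)^(T'+2) = 4*2^T' := by rw [pow_add]; norm_num [mul_comm]
      have e3 : (2:ℤ)^(T'+3) = 8*2^T' := by rw [pow_add]; norm_num [mul_comm]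
      have hw : (2:ℤ)^(p-x) = 2^(T' + ρ) := by rw [hρ]
      constructor
      · -- clean case
        intro _
        by_cases hxL : x ∈ L
        · have hxi : i₁ < x := by omega
          have htx : t x = T' + 1 := t_in x hxL
          rw [htx]
          by_cases hBx : Bp x
          · -- clean, type B
            have hD := IH.2 hBx
            have hnn : (0:ℤ) ≤ lamz x * 2^(p-x) := mul_nonneg hlamx0 (by positivity)
            rw [hRs]
            linarith
          · -- clean, type A
            have hA := lamA x hxL hxi hxp' hBx
            have hcn : 1 ≤ c := by omega
            have hA2 : (2:ℤ) ≤ lamz x := by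
              have : (1:ℤ) ≤ (c:ℤ) := by exact_mod_cast hcn
              linarith
            have hmul := mul_pow_helper (lamz x) 2 ρ 0 T' hA2 (by norm_num) (by omega)
            norm_num at hmul
            have hC := IH.1 hBx
            rw [hRs, hw]
            linarith
        · have hnB : ¬ Bp x := fun h => hxL h.1
          have htx : t x = T' := t_notin x hxL
          rw [htx]
          have hC := IH.1 hnB
          have hnn : (0:ℤ) ≤ lamz x * 2^(p-x) := mul_nonneg hlamx0 (by positivity)
          rw [hRs]
          linarith
      · -- dirty case
        intro hBx1
        obtain ⟨y, rfl⟩ : ∃ y, x = y + 2 := by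
          have := hBx1.2.1
          exact ⟨x - 2, by omega⟩
        have hBy : Bp (y+1) := by
          have : y + 2 - 1 = y + 1 := by omega
          rwa [this] at hBx1
        have hyi : i₁ ≤ y := by
          have := hBy.2.1
          omega
        have hyL : (y+1) ∈ L := hBy.1
        have hlb := lamB (y+1) hBy
        simp only [Nat.add_sub_cancel] at hlb
        have hee : y + 1 + 1 = y + 2 := by omega
        rw [hee] at hlb
        -- hlb : (F y : ℤ) + 1 - c ≤ lamz (y+2)
        have hFy1 : 2*c₀ + 1 ≤ F y := FB1 y hyi
        have hcast : ((c:ℕ):ℤ) = (c₀:ℤ) + 1 := by exact_mod_cast hcc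
        by_cases hxL : (y+2) ∈ L
        · have htx : t (y+2) = T' + 1 := t_in _ hxL
          rw [htx]
          by_cases hBx : Bp (y+2)
          · -- dirty, type B : need lamz * 2^(p-x) ≥ 4 * 2^T'
            have hD := IH.2 hBx
            have hkey : (4:ℤ) * 2^T' ≤ lamz (y+2) * 2^(T'+ρ) := by
              rcases (show 2 ≤ ρ ∨ ρ = 1 ∨ ρ = 0 by omega) with hρ2 | hρ2 | hρ2
              · have hA1 : (1:ℤ) ≤ lamz (y+2) := by omega
                have hmul := mul_pow_helper (lamz (y+2)) 1 ρ 2 T' hA1 (by norm_num) (by omega)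
                norm_num at hmul
                linarith
              · -- ρ = 1 : need lamz ≥ 2, i.e. F y ≥ c₀ + 2
                have hFy : c₀ + 2 ≤ F y := by
                  rcases (show y = i₁ ∨ i₁ + 1 ≤ y by omega) with hy | hy
                  · rcases Nat.eq_zero_or_pos c₀ with hc0 | hc0
                    · exfalso
                      have hi00 := hc00 hc0
                      have := hW3 y hyi hyL hxL
                      omega
                    · have : F y = 2*c₀+1 := by rw [hy]; exact hFi₁
                      omega
                  · have := FB2 y hy (by omega)
                    omega
                have hA1 : (2:ℤ) ≤ lamz (y+2) := by omega
                have hmul := mul_pow_helper (lamz (y+2)) 2 ρ 1 T' hA1 (by norm_num) (by omega)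
                norm_num at hmul
                linarith
              · -- ρ = 0 : need lamz ≥ 4, i.e. F y ≥ c₀ + 4
                have hFy : c₀ + 4 ≤ F y := by
                  rcases (show y = i₁ ∨ y = i₁ + 1 ∨ i₁ + 2 ≤ y by omega) with hy | hy | hy
                  · have hcnt := hW3 y hyi hyL hxL
                    have hi4 : 4 ≤ i₁ := by omega
                    have := cbig 3 (by omega)
                    have : F y = 2*c₀+1 := by rw [hy]; exact hFi₁
                    omega
                  · rcases Nat.eq_zero_or_pos c₀ with hc0 | hc0
                    · exfalso
                      have hi00 := hc00 hc0
                      have := hW3 y hyi hyL hxL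
                      omega
                    · have := FB2 y (by omega) (by omega)
                      omega
                  · have := FB3 y (by omega) (by omega)
                    omega
                have hA1 : (4:ℤ) ≤ lamz (y+2) := by omega
                have hmul := mul_pow_helper (lamz (y+2)) 4 ρ 0 T' hA1 (by norm_num) (by omega)
                norm_num at hmul
                linarith
            rw [hRs, hw]
            linarith
          · -- dirty, type A : need lamz * 2^(p-x) ≥ 6 * 2^T'
            have hC := IH.1 hBx
            have hA := lamA (y+2) hxL (by omega) hxp' hBx
            have hkey : (6:ℤ) * 2^T' ≤ lamz (y+2) * 2^(T'+ρ) := by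
              rcases (show 2 ≤ ρ ∨ ρ = 1 ∨ ρ = 0 by omega) with hρ2 | hρ2 | hρ2
              · have hA1 : (2:ℤ) ≤ lamz (y+2) := by omega
                have hmul := mul_pow_helper (lamz (y+2)) 2 ρ 2 T' hA1 (by norm_num) (by omega)
                norm_num at hmul
                linarith
              · -- ρ = 1 : need lamz ≥ 3
                have hA1 : (3:ℤ) ≤ lamz (y+2) := by
                  rcases Nat.eq_zero_or_pos c₀ with hc0 | hc0
                  · have hi00 := hc00 hc0
                    rcases (show y = i₁ ∨ i₁ + 1 ≤ y by omega) with hy | hy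
                    · exfalso
                      have := hW3 y hyi hyL hxL
                      omega
                    · have : 3 ≤ F y := le_trans hF2 (Fmono 2 y (by omega))
                      omega
                  · omega
                have hmul := mul_pow_helper (lamz (y+2)) 3 ρ 1 T' hA1 (by norm_num) (by omega)
                norm_num at hmul
                linarith
              · -- ρ = 0 : need lamz ≥ 6
                have hA1 : (6:ℤ) ≤ lamz (y+2) := by
                  rcases (show 4 ≤ c₀ ∨ c₀ ≤ 3 by omega) with hc4 | hc4
                  · omega
                  · rcases (show y = i₁ ∨ y = i₁ + 1 ∨ i₁ + 2 ≤ y by omega) with hy | hy | hy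
                    · exfalso
                      have hcnt := hW3 y hyi hyL hxL
                      have hi4 : 4 ≤ i₁ := by omega
                      have := cbig 3 (by omega)
                      omega
                    · rcases (show 2 ≤ c₀ ∨ c₀ ≤ 1 by omega) with hc2 | hc2
                      · have := FB2 y (by omega) (by omega)
                        omega
                      · exfalso
                        have hi2 : i₁ ≤ 2 := by
                          by_contra hcon
                          have := cbig 2 (by omega)
                          omega
                        have := hW3 y hyi hyL hxL
                        omega
                    · have := FB3 y (by omega) (by omega)
                      omega
                have hmul := mul_pow_helper (lamz (y+2)) 6 ρ 0 T' hA1 (by norm_num) (by omega)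
                norm_num at hmul
                linarith
            rw [hRs, hw]
            linarith
        · -- dirty, x not in L : need lamz * 2^(p-x) ≥ 2 * 2^T'
          have hnB : ¬ Bp (y+2) := fun h => hxL h.1
          have hC := IH.1 hnB
          have htx : t (y+2) = T' := t_notin _ hxL
          rw [htx]
          have hkey : (2:ℤ) * 2^T' ≤ lamz (y+2) * 2^(T'+ρ) := by
            rcases (show 1 ≤ ρ ∨ ρ = 0 by omega) with hρ2 | hρ2
            · have hA1 : (1:ℤ) ≤ lamz (y+2) := by omega
              have hmul := mul_pow_helper (lamz (y+2)) 1 ρ 1 T' hA1 (by norm_num) (by omega)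
              norm_num at hmul
              linarith
            · have hFy : c₀ + 2 ≤ F y := by
                rcases (show y = i₁ ∨ i₁ + 1 ≤ y by omega) with hy | hy
                · rcases Nat.eq_zero_or_pos c₀ with hc0 | hc0
                  · exfalso
                    have hi00 := hc00 hc0
                    have := hW2 y hyi hyL
                    omega
                  · have : F y = 2*c₀+1 := by rw [hy]; exact hFi₁
                    omega
                · have := FB2 y hy (by omega)
                  omega
              have hA1 : (2:ℤ) ≤ lamz (y+2) := by omega
              have hmul := mul_pow_helper (lamz (y+2)) 2 ρ 0 T' hA1 (by norm_num) (by omega)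
              norm_num at hmul
              linarith
          rw [hRs, hw]
          linarith
  -- total weighted sum identity
  have SUMID : ∀ y, (∑ j ∈ Finset.Icc 1 y, lamz j * 2^(y-j)) = 2^y - 1 - F y := by
    intro y
    induction y with
    | zero => simp [hF0]
    | succ y ihy =>
      have hins : Finset.Icc 1 (y+1) = insert (y+1) (Finset.Icc 1 y) := by
        ext a; simp only [Finset.mem_Icc, Finset.mem_insert]; omega
      rw [hins, Finset.sum_insert (by simp)]
      have hcong : ∀ j ∈ Finset.Icc 1 y, lamz j * 2^(y+1-j) = 2*(lamz j * 2^(y-j)) := by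
        intro j hj
        have hj' := Finset.mem_Icc.mp hj
        have hyj : y+1-j = (y-j)+1 := by omega
        rw [hyj, pow_succ]; ring
      rw [Finset.sum_congr rfl hcong, ← Finset.mul_sum, ihy]
      have hF : F (y+1) = F y + g (y+1) := hFs y
      have hl : lamz (y+1) = (F y:ℤ) + 1 - g (y+1) := by
        simp [hlamz]
      rw [hl]
      simp only [Nat.sub_self, pow_zero, mul_one, pow_succ]
      push_cast [hF]
      ring
  -- split the sum at i₁
  have hsplit : (∑ j ∈ Finset.Icc 1 p, lamz j * 2^(p-j))
      = (∑ j ∈ Finset.Icc 1 i₁, lamz j * 2^(p-j)) + R (i₁+1) := by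
    have hun : Finset.Icc 1 p = Finset.Icc 1 i₁ ∪ Finset.Icc (i₁+1) p := by
      ext a; simp only [Finset.mem_Icc, Finset.mem_union]; omega
    have hdisj : Disjoint (Finset.Icc 1 i₁) (Finset.Icc (i₁+1) p) := by
      rw [Finset.disjoint_left]
      intro a ha hb
      have h1 := Finset.mem_Icc.mp ha
      have h2 := Finset.mem_Icc.mp hb
      omega
    rw [hun, Finset.sum_union hdisj]
  have hR1 : (2:ℤ)^(t (i₁+1) + 1) - 2 ≤ R (i₁+1) := by
    refine (key (p + 1 - (i₁+1)) (i₁+1) le_rfl (by omega)).1 ?_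
    intro hB
    have := hB.2.1
    omega
  set r := t (i₁+1) with hrdef
  set Ls := L.filter (fun ℓ => ℓ < i₁) with hLsdef
  set a := Ls.card with hadef
  -- partition of |L|
  have hm_part : m = a + 1 + r := by
    have h3 := Finset.card_filter_add_card_filter_not (s := L) (p := fun ℓ => ℓ ≤ i₁)
    have h4 : L.filter (fun ℓ => ¬ ℓ ≤ i₁) = L.filter (fun ℓ => i₁+1 ≤ ℓ) := by
      apply Finset.filter_congr
      intro b _
      constructor
      · intro h; omega
      · intro h; omega
    have h5 : L.filter (fun ℓ => ℓ ≤ i₁) = insert i₁ Ls := by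
      ext b
      simp only [hLsdef, Finset.mem_filter, Finset.mem_insert]
      constructor
      · rintro ⟨h1, h2⟩
        rcases Nat.eq_or_lt_of_le h2 with h | h
        · exact Or.inl h
        · exact Or.inr ⟨h1, h⟩
      · rintro (rfl | ⟨h1, h2⟩)
        · exact ⟨hiL, le_rfl⟩
        · exact ⟨h1, by omega⟩
    have h6 : (insert i₁ Ls).card = a + 1 := by
      rw [Finset.card_insert_of_notMem (by
        simp only [hLsdef, Finset.mem_filter]
        intro hcon
        omega)]
    rw [h4, h5] at h3
    have h7 : t (i₁+1) = (L.filter (fun ℓ => i₁+1 ≤ ℓ)).card := rfl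
    omega
  -- lower bound for the early part
  have hLB1 : (∑ ℓ ∈ Ls, (2:ℤ)^(p-ℓ)) ≤ ∑ j ∈ Finset.Icc 1 i₁, lamz j * 2^(p-j) := by
    have step1 : (∑ ℓ ∈ Ls, (2:ℤ)^(p-ℓ)) ≤ ∑ ℓ ∈ Ls, lamz ℓ * 2^(p-ℓ) := by
      apply Finset.sum_le_sum
      intro ℓ hl
      have hmem := Finset.mem_filter.mp hl
      have h1 := lam_lt ℓ hmem.1 hmem.2
      have h2 : (0:ℤ) < 2^(p-ℓ) := by positivity
      nlinarith
    have step2 : (∑ ℓ ∈ Ls, lamz ℓ * 2^(p-ℓ)) ≤ ∑ j ∈ Finset.Icc 1 i₁, lamz j * 2^(p-j) := by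
      apply Finset.sum_le_sum_of_subset_of_nonneg
      · intro ℓ hl
        have hmem := Finset.mem_filter.mp hl
        have := Finset.mem_Icc.mp (hL hmem.1)
        exact Finset.mem_Icc.mpr (by omega)
      · intro j hj _
        have hj' := Finset.mem_Icc.mp hj
        exact mul_nonneg (hlam0 j hj'.1 (by omega)) (by positivity)
    linarith
  have hinj : ∀ b ∈ Ls, ∀ b' ∈ Ls, p - b = p - b' → b = b' := by
    intro b hb b' hb' hbb
    have h1 := Finset.mem_Icc.mp (hL (Finset.mem_filter.mp hb).1)
    have h2 := Finset.mem_Icc.mp (hL (Finset.mem_filter.mp hb').1)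
    omega
  have himg : (∑ ℓ ∈ Ls, (2:ℤ)^(p-ℓ)) = ∑ e ∈ Ls.image (fun ℓ => p - ℓ), (2:ℤ)^e :=
    (Finset.sum_image hinj).symm
  have hcards : (Ls.image (fun ℓ => p - ℓ)).card = a := by
    rw [Finset.card_image_of_injOn
      (fun b hb b' hb' h => hinj b (Finset.mem_coe.mp hb) b' (Finset.mem_coe.mp hb') h)]
  have hrp : r = 0 ∨ r + i₁ ≤ p := by
    rcases tbound i₁ with h | h
    · right; omega
    · left; omega
  have hER : ∀ e ∈ Ls.image (fun ℓ => p - ℓ), r + 1 ≤ e := by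
    intro e he
    obtain ⟨ℓ, hl, rfl⟩ := Finset.mem_image.mp he
    have hmem := Finset.mem_filter.mp hl
    have h1 := Finset.mem_Icc.mp (hL hmem.1)
    have h2 := hmem.2
    rcases hrp with h | h <;> omega
  have hPS := pow_sum_lower (Ls.image (fun ℓ => p - ℓ)) (r+1) hER
  rw [hcards] at hPS
  -- put everything together
  have hfin : (2:ℤ)^p - 1 - F p ≥ 2^(r+1) * (2^a - 1) + (2^(r+1) - 2) := by
    have := SUMID p
    rw [hsplit] at this
    have hchain : (2:ℤ)^(r+1) * (2^a - 1) ≤ ∑ j ∈ Finset.Icc 1 i₁, lamz j * 2^(p-j) := by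
      calc (2:ℤ)^(r+1) * (2^a - 1) ≤ ∑ e ∈ Ls.image (fun ℓ => p - ℓ), (2:ℤ)^e := hPS
        _ = ∑ ℓ ∈ Ls, (2:ℤ)^(p-ℓ) := himg.symm
        _ ≤ _ := hLB1
    linarith
  have hpowm : (2:ℤ)^(r+1) * 2^a = 2^m := by
    rw [← pow_add]
    congr 1
    omega
  linarith

lemma no_left_pair (m n : ℕ) (a b : Fin m ⊕ Fin n) (hab : a ≠ b)
    (ha : a.isLeft = true) (hb : b.isLeft = true) :
    ¬ ((K1nm m n).induce (({a, b} : Finset (Fin m ⊕ Fin n)) : Set (Fin m ⊕ Fin n))).Connected := by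
  intro hconn
  obtain ⟨a', ha'⟩ := Sum.isLeft_iff.mp ha
  obtain ⟨b', hb'⟩ := Sum.isLeft_iff.mp hb
  have hbot : ((K1nm m n).induce
      (({a, b} : Finset (Fin m ⊕ Fin n)) : Set (Fin m ⊕ Fin n))) = ⊥ := by
    ext x y
    simp only [SimpleGraph.bot_adj, iff_false]
    intro hadj
    have hx := x.2
    have hy := y.2
    simp only [Finset.coe_insert, Set.mem_insert_iff, Finset.coe_singleton,
      Set.mem_singleton_iff] at hx hy
    have hadj' : (K1nm m n).Adj x.1 y.1 := hadj
    rcases hx with hx | hx <;> rcases hy with hy | hy <;> rw [hx, hy] at hadj'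
    · rw [ha'] at hadj'; simp [K1nm, graphJoin] at hadj'
    · rw [ha', hb'] at hadj'; simp [K1nm, graphJoin] at hadj'
    · rw [hb', ha'] at hadj'; simp [K1nm, graphJoin] at hadj'
    · rw [hb'] at hadj'; simp [K1nm, graphJoin] at hadj'
  rw [hbot] at hconn
  have hamem : a ∈ (({a, b} : Finset (Fin m ⊕ Fin n)) : Set (Fin m ⊕ Fin n)) := by simp
  have hbmem : b ∈ (({a, b} : Finset (Fin m ⊕ Fin n)) : Set (Fin m ⊕ Fin n)) := by simp
  have hreach := hconn.preconnected ⟨a, hamem⟩ ⟨b, hbmem⟩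
  rw [SimpleGraph.reachable_bot] at hreach
  exact hab (congrArg Subtype.val hreach)

/-- Setting as in Statement 15 but with `n ≥ 3`: if
`S₂ = { i ≥ i₁ + 1 : u i ∈ V₀ and f (u i) > f_{i−1} − f (u i₁) }` is nonempty, then
`f(K_{1(n),m}) ≤ 2^{m+n} − 2^m + 1`. -/
theorem stmt_17 (m n : ℕ) (hm : 2 ≤ m) (hn : 3 ≤ n)
    (f : Fin m ⊕ Fin n → ℕ) (hf : IsICColoring (K1nm m n) f)
    (hmax : ∑ v, f v = ICIndex (K1nm m n))
    (u : ℕ → Fin m ⊕ Fin n) (hu : Set.BijOn u (Set.Icc 1 (m + n)) Set.univ)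
    (hmono : ∀ i, 1 ≤ i → i + 1 ≤ m + n → f (u i) < f (u (i + 1)))
    (s r : ℕ → ℤ) (hs0 : s 0 = 0)
    (hs : ∀ i, 1 ≤ i → i ≤ m + n → s i = f (u i))
    (hr : ∀ i, 1 ≤ i → i ≤ m + n → r i = s i - ∑ j ∈ Finset.range i, s j)
    (k₀ : ℕ) (hk₀mem : 1 ≤ k₀ ∧ k₀ ≤ m + n ∧ (u k₀).isLeft = true)
    (hk₀max : ∀ j, 1 ≤ j → j ≤ m + n → (u j).isLeft = true → j ≤ k₀)
    (i₁ : ℕ)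
    (hi₁mem : 1 ≤ i₁ ∧ i₁ < k₀ ∧ r i₁ = 1 ∧ (u i₁).isLeft = true)
    (hi₁min : ∀ j, 1 ≤ j → j < k₀ → r j = 1 → (u j).isLeft = true → i₁ ≤ j)
    (hS₂ : ∃ i, i₁ + 1 ≤ i ∧ i ≤ m + n ∧ (u i).isLeft = true ∧
      (∑ k ∈ Finset.Icc 1 (i - 1), (f (u k) : ℤ)) - f (u i₁) < (f (u i) : ℤ)) :
    ∑ v, f v ≤ 2 ^ (m + n) - 2 ^ m + 1 := by
  set p := m + n with hp
  have hfpos := hf.1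
  have huinj : ∀ a b, 1 ≤ a → a ≤ p → 1 ≤ b → b ≤ p → u a = u b → a = b := by
    intro a b ha1 ha2 hb1 hb2 hab
    exact hu.injOn (Set.mem_Icc.mpr ⟨ha1, ha2⟩) (Set.mem_Icc.mpr ⟨hb1, hb2⟩) hab
  have husurj : ∀ v : Fin m ⊕ Fin n, ∃ j, 1 ≤ j ∧ j ≤ p ∧ u j = v := by
    intro v
    obtain ⟨j, hj, hjv⟩ := hu.surjOn (Set.mem_univ v)
    exact ⟨j, (Set.mem_Icc.mp hj).1, (Set.mem_Icc.mp hj).2, hjv⟩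
  have hmonoLT : ∀ a b, 1 ≤ a → a < b → b ≤ p → f (u a) < f (u b) := by
    intro a b ha hab hbp
    induction b with
    | zero => omega
    | succ b ihb =>
      rcases Nat.lt_or_ge a b with h | h
      · exact lt_trans (ihb h (by omega)) (hmono b (by omega) (by omega))
      · have hae : a = b := by omega
        subst hae
        exact hmono a ha (by omega)
  have hmonoLE : ∀ a b, 1 ≤ a → a ≤ b → b ≤ p → f (u a) ≤ f (u b) := by
    intro a b ha hab hbp
    rcases Nat.eq_or_lt_of_le hab with h | h
    · subst h; exact le_rfl
    · exact le_of_lt (hmonoLT a b ha h hbp)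
  set FN : ℕ → ℕ := fun j => ∑ k ∈ Finset.Icc 1 j, f (u k) with hFN
  have hFN0 : FN 0 = 0 := by simp [hFN]
  have hFNs : ∀ j, FN (j+1) = FN j + f (u (j+1)) := by
    intro j
    simp only [hFN]
    have hins : Finset.Icc 1 (j+1) = insert (j+1) (Finset.Icc 1 j) := by
      ext a; simp only [Finset.mem_Icc, Finset.mem_insert]; omega
    rw [hins, Finset.sum_insert (by simp)]
    omega
  have hFNmono : ∀ a b, a ≤ b → FN a ≤ FN b := by
    intro a b hab
    induction b with
    | zero => have : a = 0 := by omega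
              simp [this]
    | succ b ihb =>
      rcases Nat.lt_or_ge a (b+1) with h | h
      · have h1 := ihb (by omega)
        have h2 := hFNs b
        omega
      · have : a = b + 1 := by omega
        simp [this]
  have hNtot : ∑ v, f v = FN p := by
    simp only [hFN]
    refine (Finset.sum_bij (fun j _ => u j) (fun j _ => Finset.mem_univ _) ?_ ?_ ?_).symm
    · intro a ha b hb hab
      have ha' := Finset.mem_Icc.mp ha
      have hb' := Finset.mem_Icc.mp hb
      exact huinj a b ha'.1 ha'.2 hb'.1 hb'.2 hab
    · intro v _
      obtain ⟨j, h1, h2, h3⟩ := husurj v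
      exact ⟨j, Finset.mem_Icc.mpr ⟨h1, h2⟩, h3⟩
    · intro j _; rfl
  have hsubsum : ∀ S : Finset (Fin m ⊕ Fin n),
      (∑ v ∈ S, f v) = ∑ j ∈ (Finset.Icc 1 p).filter (fun j => u j ∈ S), f (u j) := by
    intro S
    refine (Finset.sum_bij (fun j _ => u j) ?_ ?_ ?_ ?_).symm
    · intro j hj
      exact (Finset.mem_filter.mp hj).2
    · intro a ha b hb hab
      have ha' := Finset.mem_Icc.mp (Finset.mem_filter.mp ha).1
      have hb' := Finset.mem_Icc.mp (Finset.mem_filter.mp hb).1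
      exact huinj a b ha'.1 ha'.2 hb'.1 hb'.2 hab
    · intro v hv
      obtain ⟨j, h1, h2, h3⟩ := husurj v
      refine ⟨j, Finset.mem_filter.mpr ⟨Finset.mem_Icc.mpr ⟨h1, h2⟩, ?_⟩, h3⟩
      rw [h3]; exact hv
    · intro j _; rfl
  have hppos : 1 ≤ p := by omega
  have hi₁p : i₁ ≤ p := by omega
  -- the range-sum identity for s
  have hrange : ∀ ℓ, 1 ≤ ℓ → ℓ ≤ p → (∑ j ∈ Finset.range ℓ, s j) = (FN (ℓ-1) : ℤ) := by
    intro ℓ h1 h2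
    have hins : Finset.range ℓ = insert 0 (Finset.Icc 1 (ℓ-1)) := by
      ext a; simp only [Finset.mem_range, Finset.mem_insert, Finset.mem_Icc]; omega
    rw [hins, Finset.sum_insert (by simp), hs0]
    have hcg : ∀ j ∈ Finset.Icc 1 (ℓ-1), s j = (f (u j) : ℤ) := by
      intro j hj
      have hj' := Finset.mem_Icc.mp hj
      exact hs j hj'.1 (by omega)
    rw [Finset.sum_congr rfl hcg]
    simp only [hFN]
    push_cast
    ring
  -- value of the special vertex
  have hcN : f (u i₁) = FN (i₁ - 1) + 1 := by
    have h1 := hr i₁ (by omega) hi₁p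
    have h2 := hs i₁ (by omega) hi₁p
    have h3 := hrange i₁ (by omega) hi₁p
    have h4 := hi₁mem.2.2.1
    rw [h1, h2, h3] at h4
    omega
  -- L1 : each value at most prefix sum + 1
  have hlamN : ∀ j, 1 ≤ j → j ≤ p → f (u j) ≤ FN (j-1) + 1 := by
    intro j hj1 hjp
    by_contra hcon
    push_neg at hcon
    have hk1 : 1 ≤ FN (j-1) + 1 := by omega
    have hk2 : FN (j-1) + 1 ≤ ∑ v, f v := by
      rw [hNtot]
      have h5 := hFNs (j-1)
      have h6 : j - 1 + 1 = j := by omega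
      rw [h6] at h5
      have h7 := hFNmono j p hjp
      omega
    obtain ⟨S, hSne, hSconn, hSsum⟩ := hf.2 (FN (j-1) + 1) hk1 hk2
    rw [hsubsum S] at hSsum
    set T := (Finset.Icc 1 p).filter (fun j => u j ∈ S) with hT
    have hTsub : ∀ τ ∈ T, τ ≤ j - 1 := by
      intro τ hτ
      have hτ' := Finset.mem_Icc.mp (Finset.mem_filter.mp hτ).1
      by_contra hτc
      have h8 : f (u j) ≤ f (u τ) := hmonoLE j τ hj1 (by omega) hτ'.2
      have h9 : f (u τ) ≤ ∑ j ∈ T, f (u j) :=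
        Finset.single_le_sum (f := fun j => f (u j)) (fun i _ => Nat.zero_le _) hτ
      omega
    have h10 : T ⊆ Finset.Icc 1 (j-1) := by
      intro τ hτ
      have hτ' := Finset.mem_Icc.mp (Finset.mem_filter.mp hτ).1
      exact Finset.mem_Icc.mpr ⟨hτ'.1, hTsub τ hτ⟩
    have h11 : (∑ j ∈ T, f (u j)) ≤ FN (j-1) := by
      have := Finset.sum_le_sum_of_subset (f := fun j => f (u j)) h10
      simpa [hFN] using this
    omega
  -- uniqueness of representation of f (u i₁)
  have hUNIQ : ∀ T : Finset ℕ, T ⊆ Finset.Icc 1 p →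
      (∑ j ∈ T, f (u j)) = f (u i₁) → T = {i₁} := by
    intro T hTsub hTsum
    have hmem : i₁ ∈ T := by
      by_cases hex : ∃ τ ∈ T, i₁ ≤ τ
      · obtain ⟨τ, hτT, hτi⟩ := hex
        have hτ' := Finset.mem_Icc.mp (hTsub hτT)
        have h1 : f (u i₁) ≤ f (u τ) := hmonoLE i₁ τ (by omega) hτi hτ'.2
        have h2 : f (u τ) ≤ ∑ j ∈ T, f (u j) :=
          Finset.single_le_sum (f := fun j => f (u j)) (fun i _ => Nat.zero_le _) hτT
        have h3 : τ = i₁ := by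
          by_contra hne
          have := hmonoLT i₁ τ (by omega) (by omega) hτ'.2
          omega
        rwa [h3] at hτT
      · exfalso
        push_neg at hex
        have h10 : T ⊆ Finset.Icc 1 (i₁-1) := by
          intro τ hτ
          have hτ' := Finset.mem_Icc.mp (hTsub hτ)
          have := hex τ hτ
          exact Finset.mem_Icc.mpr ⟨hτ'.1, by omega⟩
        have h11 : (∑ j ∈ T, f (u j)) ≤ FN (i₁-1) := by
          have := Finset.sum_le_sum_of_subset (f := fun j => f (u j)) h10
          simpa [hFN] using this
        omega
    have herase : (∑ j ∈ T.erase i₁, f (u j)) = 0 := by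
      have h9 : f (u i₁) + (∑ j ∈ T.erase i₁, f (u j)) = ∑ j ∈ T, f (u j) :=
        Finset.add_sum_erase T (fun j => f (u j)) hmem
      omega
    apply Finset.eq_singleton_iff_unique_mem.mpr
    refine ⟨hmem, ?_⟩
    intro τ hτT
    by_contra hne
    have hτe : τ ∈ T.erase i₁ := Finset.mem_erase.mpr ⟨hne, hτT⟩
    have h2 : f (u τ) ≤ ∑ j ∈ T.erase i₁, f (u j) :=
      Finset.single_le_sum (f := fun j => f (u j)) (fun i _ => Nat.zero_le _) hτe
    have := hfpos (u τ)
    omega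
  -- the dichotomy from connectivity
  have hdichN : ∀ ℓ, 1 ≤ ℓ → ℓ ≤ p → (u ℓ).isLeft = true → i₁ < ℓ →
      FN (ℓ-1) < f (u ℓ) + f (u i₁) →
      ℓ < p ∧ f (u (ℓ+1)) ≤ f (u ℓ) + f (u i₁) := by
    intro ℓ hℓ1 hℓp hℓL hℓi hbig
    have hne : u ℓ ≠ u i₁ := by
      intro hcon
      have := huinj ℓ i₁ hℓ1 hℓp (by omega) hi₁p hcon
      omega
    have hk1 : 1 ≤ f (u ℓ) + f (u i₁) := by
      have := hfpos (u ℓ); omega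
    have hk2 : f (u ℓ) + f (u i₁) ≤ ∑ v, f v := by
      have h1 : ({u ℓ, u i₁} : Finset (Fin m ⊕ Fin n)) ⊆ Finset.univ := Finset.subset_univ _
      have h2 := Finset.sum_le_sum_of_subset (f := f) h1
      rwa [Finset.sum_pair hne] at h2
    obtain ⟨S, hSne, hSconn, hSsum⟩ := hf.2 (f (u ℓ) + f (u i₁)) hk1 hk2
    rw [hsubsum S] at hSsum
    set T := (Finset.Icc 1 p).filter (fun j => u j ∈ S) with hT
    have hTIcc : T ⊆ Finset.Icc 1 p := Finset.filter_subset _ _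
    have hex : ∃ τ ∈ T, ℓ < τ := by
      by_contra hno
      push_neg at hno
      by_cases hin : ℓ ∈ T
      · -- T = {ℓ, i₁} and S = {u ℓ, u i₁} : contradiction with connectivity
        have h1 : f (u ℓ) + (∑ j ∈ T.erase ℓ, f (u j)) = ∑ j ∈ T, f (u j) :=
          Finset.add_sum_erase T (fun j => f (u j)) hin
        have h2 : (∑ j ∈ T.erase ℓ, f (u j)) = f (u i₁) := by omega
        have h3 : T.erase ℓ = {i₁} :=
          hUNIQ _ (fun τ hτ => hTIcc (Finset.mem_of_mem_erase hτ)) h2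
        have h4 : T = {ℓ, i₁} := by
          rw [← Finset.insert_erase hin, h3]
        have hSeq : S = {u ℓ, u i₁} := by
          ext v
          constructor
          · intro hv
            obtain ⟨j, hj1, hj2, hj3⟩ := husurj v
            have hjT : j ∈ T := by
              refine Finset.mem_filter.mpr ⟨Finset.mem_Icc.mpr ⟨hj1, hj2⟩, ?_⟩
              rw [hj3]; exact hv
            rw [h4] at hjT
            simp only [Finset.mem_insert, Finset.mem_singleton] at hjT
            simp only [Finset.mem_insert, Finset.mem_singleton]
            rcases hjT with rfl | rfl
            · left; exact hj3.symm
            · right; exact hj3.symm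
          · intro hv
            simp only [Finset.mem_insert, Finset.mem_singleton] at hv
            rcases hv with rfl | rfl
            · have : ℓ ∈ T := by rw [h4]; simp
              exact (Finset.mem_filter.mp this).2
            · have : i₁ ∈ T := by rw [h4]; simp
              exact (Finset.mem_filter.mp this).2
        rw [hSeq] at hSconn
        exact no_left_pair m n (u ℓ) (u i₁) hne hℓL hi₁mem.2.2.2 hSconn
      · have h10 : T ⊆ Finset.Icc 1 (ℓ-1) := by
          intro τ hτ
          have hτ' := Finset.mem_Icc.mp (hTIcc hτ)
          have h5 := hno τ hτ
          have h6 : τ ≠ ℓ := fun h => hin (h ▸ hτ)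
          exact Finset.mem_Icc.mpr ⟨hτ'.1, by omega⟩
        have h11 : (∑ j ∈ T, f (u j)) ≤ FN (ℓ-1) := by
          have := Finset.sum_le_sum_of_subset (f := fun j => f (u j)) h10
          simpa [hFN] using this
        omega
    obtain ⟨τ, hτT, hτℓ⟩ := hex
    have hτ' := Finset.mem_Icc.mp (hTIcc hτT)
    refine ⟨by omega, ?_⟩
    have h1 : f (u (ℓ+1)) ≤ f (u τ) := hmonoLE (ℓ+1) τ (by omega) (by omega) hτ'.2
    have h2 : f (u τ) ≤ ∑ j ∈ T, f (u j) :=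
      Finset.single_le_sum (f := fun j => f (u j)) (fun i _ => Nat.zero_le _) hτT
    omega
  -- the set of left indices
  set L : Finset ℕ := (Finset.Icc 1 p).filter (fun j => (u j).isLeft = true) with hLdef
  have hLsub : L ⊆ Finset.Icc 1 p := Finset.filter_subset _ _
  have hLcard : L.card = m := by
    have hcard2 : ((Finset.univ : Finset (Fin m ⊕ Fin n)).filter
        (fun v => v.isLeft = true)).card = m := by
      have himg : (Finset.univ.filter (fun v : Fin m ⊕ Fin n => v.isLeft = true))
          = Finset.univ.map ⟨Sum.inl, Sum.inl_injective⟩ := by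
        ext v
        cases v with
        | inl a => simp
        | inr b => simp
      rw [himg, Finset.card_map, Finset.card_univ, Fintype.card_fin]
    rw [← hcard2, hLdef]
    apply Finset.card_bij (fun j _ => u j)
    · intro j hj
      have := (Finset.mem_filter.mp hj).2
      exact Finset.mem_filter.mpr ⟨Finset.mem_univ _, this⟩
    · intro a ha b hb hab
      have ha' := Finset.mem_Icc.mp (Finset.mem_filter.mp ha).1
      have hb' := Finset.mem_Icc.mp (Finset.mem_filter.mp hb).1
      exact huinj a b ha'.1 ha'.2 hb'.1 hb'.2 hab
    · intro v hv
      obtain ⟨j, h1, h2, h3⟩ := husurj v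
      refine ⟨j, Finset.mem_filter.mpr ⟨Finset.mem_Icc.mpr ⟨h1, h2⟩, ?_⟩, h3⟩
      rw [h3]
      exact (Finset.mem_filter.mp hv).2
  have hiL : i₁ ∈ L := by
    refine Finset.mem_filter.mpr ⟨Finset.mem_Icc.mpr ⟨by omega, hi₁p⟩, hi₁mem.2.2.2⟩
  -- lefts before i₁ have small values
  have hltN : ∀ ℓ, ℓ ∈ L → ℓ < i₁ → f (u ℓ) ≤ FN (ℓ-1) := by
    intro ℓ hℓL hℓi
    have hℓ' := Finset.mem_Icc.mp (hLsub hℓL)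
    have h1 := hlamN ℓ hℓ'.1 hℓ'.2
    rcases Nat.eq_or_lt_of_le h1 with h | h
    · exfalso
      have h2 := hr ℓ hℓ'.1 hℓ'.2
      have h3 := hs ℓ hℓ'.1 hℓ'.2
      have h4 := hrange ℓ hℓ'.1 hℓ'.2
      have h5 : r ℓ = 1 := by
        rw [h2, h3, h4]
        push_cast [h]
        ring
      have h6 := hi₁min ℓ hℓ'.1 (by omega) h5 (Finset.mem_filter.mp hℓL).2
      omega
    · omega
  -- apply the arithmetic bound
  have harith := arith_bound p m i₁ L (fun j => f (u j)) FN hLsub hLcard (by omega)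
    hFN0 hFNs (fun j h1 h2 => hfpos (u j)) (fun j h1 h2 => hmono j h1 h2) hiL hcN
    hlamN hltN
    (fun ℓ hℓ hi hbig => hdichN ℓ (Finset.mem_Icc.mp (hLsub hℓ)).1
      (Finset.mem_Icc.mp (hLsub hℓ)).2 (Finset.mem_filter.mp hℓ).2 hi hbig)
  have h2m : (2:ℕ)^m ≤ 2^p := Nat.pow_le_pow_right (by norm_num) (by omega)
  rw [hNtot]
  zify [h2m]
  exact harith
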